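/- The Busemann volume is invariant under projective automorphisms: if Ω ⊆ ℝⁿ is bounded, open and convex and g ∈ GL(n+1,ℝ) satisfies g(C(Ω)) = C(Ω), then for every Borel set A ⊆ Ω one has μ_Ω(g·A) = μ_Ω(A), where g·A is the image of A under the induced map of Ω. -/

import Mathlib

open Set MeasureTheory
open scoped ENNReal Classical

noncomputable section

/-- The parameter at which the ray from `x` in direction `v` exits `Ω`:
`x + (rayParam Ω x v) • v` is the point where this ray meets `∂Ω`. -/
def rayParam {n : ℕ} (Ω : Set (EuclideanSpace ℝ (Fin n)))
    (x v : EuclideanSpace ℝ (Fin n)) : ℝ :=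
  sSup {t : ℝ | 0 ≤ t ∧ x + t • v ∈ closure Ω}

variable {n : ℕ} {Ω : Set (EuclideanSpace ℝ (Fin n))}

lemma raySet_eq_Icc (hbd : Bornology.IsBounded Ω) (hop : IsOpen Ω) (hconv : Convex ℝ Ω)
    {x v : EuclideanSpace ℝ (Fin n)} (hx : x ∈ Ω) (hv : v ≠ 0) :
    {t : ℝ | 0 ≤ t ∧ x + t • v ∈ closure Ω} = Icc 0 (rayParam Ω x v) ∧ 0 < rayParam Ω x v := by
  set S := {t : ℝ | 0 ≤ t ∧ x + t • v ∈ closure Ω} with hS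
  obtain ⟨M, hM⟩ := (hbd.closure).subset_closedBall 0
  have hvpos : 0 < ‖v‖ := norm_pos_iff.2 hv
  have hSbdd : BddAbove S := by
    refine ⟨(M + ‖x‖) / ‖v‖, fun t ht => ?_⟩
    have h1 : ‖x + t • v‖ ≤ M := by simpa [dist_eq_norm] using hM ht.2
    have h2 : ‖t • v‖ - ‖x‖ ≤ ‖x + t • v‖ := by
      have h4 := norm_add_le (-x) (x + t • v)
      have h5 : -x + (x + t • v) = t • v := by abel
      rw [h5, norm_neg] at h4
      linarith
    have : t * ‖v‖ ≤ M + ‖x‖ := by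
      rw [norm_smul, Real.norm_eq_abs, abs_of_nonneg ht.1] at h2; linarith
    exact (le_div_iff₀ hvpos).2 this
  have h0 : (0:ℝ) ∈ S := ⟨le_rfl, by simpa using subset_closure hx⟩
  have hne : S.Nonempty := ⟨0, h0⟩
  have hclosed : IsClosed S := by
    have : S = Ici (0:ℝ) ∩ (fun t : ℝ => x + t • v) ⁻¹' closure Ω := by
      ext t; simp [hS, and_comm]
    rw [this]
    exact isClosed_Ici.inter (IsClosed.preimage (by continuity) isClosed_closure)
  have hconvS : Convex ℝ S := by
    have : S = Ici (0:ℝ) ∩ (fun t : ℝ => x + t • v) ⁻¹' closure Ω := by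
      ext t; simp [hS, and_comm]
    rw [this]
    refine (convex_Ici 0).inter ?_
    intro a ha b hb p q hp hq hpq
    simp only [mem_preimage] at *
    have haff : x + (p • a + q • b) • v = p • (x + a • v) + q • (x + b • v) := by
      have h1 : p • (x + a • v) + q • (x + b • v) = (p + q) • x + (p * a + q * b) • v := by
        simp only [smul_add, smul_smul, add_smul]; abel
      rw [h1, hpq, one_smul]; norm_num
    rw [haff]
    exact (hconv.closure) ha hb hp hq hpq
  have hmemsup : rayParam Ω x v ∈ S := hclosed.csSup_mem hne hSbdd
  have hIcc : S = Icc 0 (rayParam Ω x v) := by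
    apply Subset.antisymm
    · intro t ht; exact ⟨ht.1, le_csSup hSbdd ht⟩
    · intro t ht
      have := hconvS.ordConnected.out h0 hmemsup
      exact this ht
  constructor
  · exact hIcc
  · obtain ⟨ε, hε, hball⟩ := Metric.isOpen_iff.1 hop x hx
    have : ε / (2 * ‖v‖) ∈ S := by
      refine ⟨le_of_lt (by positivity), subset_closure (hball ?_)⟩
      rw [Metric.mem_ball, dist_eq_norm]
      have : ‖x + (ε / (2 * ‖v‖)) • v - x‖ = ε / (2 * ‖v‖) * ‖v‖ := by
        rw [add_sub_cancel_left, norm_smul, Real.norm_eq_abs,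
          abs_of_nonneg (le_of_lt (by positivity : (0:ℝ) < ε / (2 * ‖v‖)))]
      rw [this]
      rw [div_mul_eq_mul_div, mul_comm]
      rw [div_lt_iff₀ (by positivity)]
      nlinarith
    calc (0:ℝ) < ε / (2 * ‖v‖) := by positivity
    _ ≤ rayParam Ω x v := le_csSup hSbdd this


/-- The Hilbert--Finsler norm `‖v‖ₓ^Ω = (1/2)(1/|x-p⁻| + 1/|x-p⁺|)|v|`, where
`p⁺` (resp. `p⁻`) is the point where the ray from `x` in the direction `v`
(resp. `-v`) meets `∂Ω`. -/
def finslerNorm {n : ℕ} (Ω : Set (EuclideanSpace ℝ (Fin n)))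
    (x v : EuclideanSpace ℝ (Fin n)) : ℝ :=
  if v = 0 then 0
  else
    let pPlus := x + rayParam Ω x v • v
    let pMinus := x + rayParam Ω x (-v) • (-v)
    (1 / 2) * (1 / dist x pMinus + 1 / dist x pPlus) * ‖v‖

/-- Lebesgue measure on `ℝⁿ` normalized so that the Euclidean unit ball has measure 1. -/
def normVol (n : ℕ) : Measure (EuclideanSpace ℝ (Fin n)) :=
  (volume (Metric.ball (0 : EuclideanSpace ℝ (Fin n)) 1))⁻¹ • volume

/-- The Busemann (Hilbert) volume: `μ_Ω(A) = ∫_A Vol(Bₓ(1))⁻¹ dVol(x)`, where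
`Bₓ(1)` is the unit ball of the Hilbert--Finsler norm at `x`. -/
def busemannVolume {n : ℕ} (Ω A : Set (EuclideanSpace ℝ (Fin n))) : ℝ≥0∞ :=
  ∫⁻ x in A, (normVol n {v : EuclideanSpace ℝ (Fin n) | finslerNorm Ω x v < 1})⁻¹ ∂(normVol n)

/-- The cone `C(Ω) = {t•(1,x) : x ∈ Ω, t > 0} ⊆ ℝ × ℝⁿ` over `Ω`. -/
def projCone {n : ℕ} (Ω : Set (EuclideanSpace ℝ (Fin n))) :
    Set (ℝ × EuclideanSpace ℝ (Fin n)) :=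
  {p | ∃ x ∈ Ω, ∃ t : ℝ, 0 < t ∧ p = (t, t • x)}

/-- The induced map on `Ω` coming from a linear automorphism of the cone. -/
def conePsi {n : ℕ} (g : (ℝ × EuclideanSpace ℝ (Fin n)) ≃ₗ[ℝ] ℝ × EuclideanSpace ℝ (Fin n))
    (x : EuclideanSpace ℝ (Fin n)) : EuclideanSpace ℝ (Fin n) :=
  ((g (1, x)).1)⁻¹ • (g (1, x)).2

lemma symm_coneAuto {g : (ℝ × EuclideanSpace ℝ (Fin n)) ≃ₗ[ℝ] ℝ × EuclideanSpace ℝ (Fin n)}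
    (hg : g '' projCone Ω = projCone Ω) : g.symm '' projCone Ω = projCone Ω := by
  conv_lhs => rw [← hg]
  rw [← image_comp]
  simp [Function.comp_def]

lemma coneAuto_closure_pos {g : (ℝ × EuclideanSpace ℝ (Fin n)) ≃ₗ[ℝ] ℝ × EuclideanSpace ℝ (Fin n)}
    (hbd : Bornology.IsBounded Ω)
    (hg : g '' projCone Ω = projCone Ω) {x : EuclideanSpace ℝ (Fin n)} (hx : x ∈ closure Ω) :
    0 < (g (1, x)).1 ∧ conePsi g x ∈ closure Ω ∧ g (1, x) = (g (1, x)).1 • (1, conePsi g x) := by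
  obtain ⟨M, hM⟩ := hbd.closure.subset_closedBall 0
  -- (1, x) is in the closure of the cone
  have hmem : (1, x) ∈ closure (projCone Ω) := by
    have hc : Continuous (fun y : EuclideanSpace ℝ (Fin n) => ((1:ℝ), y)) := by continuity
    have := (hc.continuousWithinAt (s := Ω) (x := x)).mem_closure_image hx
    refine closure_mono ?_ this
    rintro p ⟨y, hy, rfl⟩
    exact ⟨y, hy, 1, one_pos, by simp⟩
  -- hence g (1, x) is in the closure of the cone
  have hgmem : g (1, x) ∈ closure (projCone Ω) := by
    have hcont : Continuous g := LinearMap.continuous_of_finiteDimensional g.toLinearMap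
    have := (hcont.continuousWithinAt (s := projCone Ω) (x := (1, x))).mem_closure_image hmem
    rwa [hg] at this
  -- closure of cone is inside K1
  have hK1 : closure (projCone Ω) ⊆ {p : ℝ × EuclideanSpace ℝ (Fin n) | 0 ≤ p.1 ∧ ‖p.2‖ ≤ M * p.1} := by
    apply closure_minimal
    · rintro p ⟨y, hy, t, ht, rfl⟩
      refine ⟨le_of_lt ht, ?_⟩
      have hyM : ‖y‖ ≤ M := by simpa [dist_eq_norm] using hM (subset_closure hy)
      simp only [norm_smul, Real.norm_eq_abs, abs_of_pos ht]
      calc t * ‖y‖ ≤ t * M := mul_le_mul_of_nonneg_left hyM ht.le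
      _ = M * t := mul_comm _ _
    · have : IsClosed {p : ℝ × EuclideanSpace ℝ (Fin n) | 0 ≤ p.1 ∧ ‖p.2‖ ≤ M * p.1} := by
        apply IsClosed.inter
        · exact isClosed_le continuous_const continuous_fst
        · exact isClosed_le (continuous_snd.norm) (continuous_const.mul continuous_fst)
      exact this
  have hK := hK1 hgmem
  have hgne : g (1, x) ≠ 0 := by
    intro h
    have : ((1:ℝ), x) = 0 := by
      have := congrArg g.symm h
      simpa using this
    exact one_ne_zero (congrArg Prod.fst this)
  have hapos : 0 < (g (1, x)).1 := by
    rcases lt_or_eq_of_le hK.1 with h | h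
    · exact h
    · exfalso
      have h2 : ‖(g (1, x)).2‖ ≤ 0 := by have := hK.2; rw [← h] at this; simpa using this
      have h2' : (g (1, x)).2 = 0 := by
        have := norm_nonneg (g (1, x)).2
        exact norm_eq_zero.1 (le_antisymm h2 this)
      apply hgne
      ext
      · exact h.symm
      · rw [h2']; rfl
  refine ⟨hapos, ?_, ?_⟩
  · -- conePsi g x ∈ closure Ω
    have hcw : ContinuousWithinAt (fun p : ℝ × EuclideanSpace ℝ (Fin n) => (p.1)⁻¹ • p.2)
        (projCone Ω) (g (1, x)) := by
      apply ContinuousAt.continuousWithinAt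
      exact ((continuousAt_fst.inv₀ (ne_of_gt hapos)).smul continuousAt_snd)
    have := hcw.mem_closure_image hgmem
    refine closure_mono ?_ this
    rintro q ⟨p, ⟨y, hy, t, ht, rfl⟩, rfl⟩
    simpa [smul_smul, inv_mul_cancel₀ (ne_of_gt ht)] using hy
  · -- the decomposition
    rw [Prod.ext_iff]
    constructor
    · simp
    · show (g (1,x)).2 = ((g (1,x)).1 • ((1 : ℝ), conePsi g x)).2
      rw [Prod.smul_snd, conePsi, smul_smul, mul_inv_cancel₀ (ne_of_gt hapos), one_smul]

lemma coneAuto_mem {g : (ℝ × EuclideanSpace ℝ (Fin n)) ≃ₗ[ℝ] ℝ × EuclideanSpace ℝ (Fin n)}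
    (hg : g '' projCone Ω = projCone Ω) {x : EuclideanSpace ℝ (Fin n)} (hx : x ∈ Ω) :
    conePsi g x ∈ Ω := by
  have hmem : g (1, x) ∈ projCone Ω := by
    rw [← hg]; exact ⟨(1, x), ⟨x, hx, 1, one_pos, by simp⟩, rfl⟩
  obtain ⟨y, hy, t, ht, hp⟩ := hmem
  have h1 : (g (1,x)).1 = t := by rw [hp]
  have h2 : (g (1,x)).2 = t • y := by rw [hp]
  have : conePsi g x = y := by
    rw [conePsi, h1, h2, smul_smul, inv_mul_cancel₀ (ne_of_gt ht), one_smul]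
  rwa [this]

lemma coneAuto_symm_one {g : (ℝ × EuclideanSpace ℝ (Fin n)) ≃ₗ[ℝ] ℝ × EuclideanSpace ℝ (Fin n)}
    (hbd : Bornology.IsBounded Ω)
    (hg : g '' projCone Ω = projCone Ω) {x : EuclideanSpace ℝ (Fin n)} (hx : x ∈ closure Ω) :
    g.symm (1, conePsi g x) = ((g (1, x)).1)⁻¹ • (1, x) := by
  obtain ⟨hapos, -, hdec⟩ := coneAuto_closure_pos hbd hg hx
  have h1 : ((1:ℝ), conePsi g x) = ((g (1, x)).1)⁻¹ • g (1, x) := by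
    rw [Prod.ext_iff]
    constructor
    · show (1:ℝ) = (((g (1, x)).1)⁻¹ • g (1, x)).1
      rw [Prod.smul_fst, smul_eq_mul, inv_mul_cancel₀ (ne_of_gt hapos)]
    · rfl
  calc g.symm (1, conePsi g x) = g.symm (((g (1, x)).1)⁻¹ • g (1, x)) := by rw [← h1]
  _ = ((g (1, x)).1)⁻¹ • g.symm (g (1, x)) := g.symm.map_smul _ _
  _ = ((g (1, x)).1)⁻¹ • (1, x) := by rw [LinearEquiv.symm_apply_apply]

lemma conePsi_symm_conePsi {g : (ℝ × EuclideanSpace ℝ (Fin n)) ≃ₗ[ℝ] ℝ × EuclideanSpace ℝ (Fin n)}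
    (hbd : Bornology.IsBounded Ω)
    (hg : g '' projCone Ω = projCone Ω) {x : EuclideanSpace ℝ (Fin n)} (hx : x ∈ closure Ω) :
    conePsi g.symm (conePsi g x) = x := by
  obtain ⟨hapos, -, -⟩ := coneAuto_closure_pos hbd hg hx
  have h := coneAuto_symm_one hbd hg hx
  rw [conePsi, h]
  simp only [Prod.smul_fst, Prod.smul_snd, smul_eq_mul, mul_one]
  rw [inv_inv, smul_smul, mul_inv_cancel₀ (ne_of_gt hapos), one_smul]


/-- The differential of `conePsi g` at `x`, as a linear map. -/
def coneD {n : ℕ} (g : (ℝ × EuclideanSpace ℝ (Fin n)) ≃ₗ[ℝ] ℝ × EuclideanSpace ℝ (Fin n))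
    (x : EuclideanSpace ℝ (Fin n)) : EuclideanSpace ℝ (Fin n) →ₗ[ℝ] EuclideanSpace ℝ (Fin n) :=
  ((g (1, x)).1)⁻¹ •
    (((LinearMap.snd ℝ ℝ (EuclideanSpace ℝ (Fin n))).comp
        (g.toLinearMap.comp (LinearMap.inr ℝ ℝ (EuclideanSpace ℝ (Fin n))))) -
      (LinearMap.smulRight
        ((LinearMap.fst ℝ ℝ (EuclideanSpace ℝ (Fin n))).comp
          (g.toLinearMap.comp (LinearMap.inr ℝ ℝ (EuclideanSpace ℝ (Fin n)))))
        (conePsi g x)))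

variable {n : ℕ} {Ω : Set (EuclideanSpace ℝ (Fin n))}
variable {g : (ℝ × EuclideanSpace ℝ (Fin n)) ≃ₗ[ℝ] ℝ × EuclideanSpace ℝ (Fin n)}

lemma coneD_apply (x v : EuclideanSpace ℝ (Fin n)) :
    coneD g x v = ((g (1, x)).1)⁻¹ • ((g (0, v)).2 - (g (0, v)).1 • conePsi g x) := by
  simp [coneD, LinearMap.smul_apply, LinearMap.sub_apply, LinearMap.comp_apply]

lemma g_one_add (x v : EuclideanSpace ℝ (Fin n)) (τ : ℝ) :
    g (1, x + τ • v) = g (1, x) + τ • g (0, v) := by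
  have : ((1:ℝ), x + τ • v) = (1, x) + τ • ((0:ℝ), v) := by
    rw [Prod.ext_iff]; constructor <;> simp
  rw [this, map_add, g.map_smul]

/-- Fractional-linear formula for `conePsi` along a line. -/
lemma conePsi_line (x v : EuclideanSpace ℝ (Fin n)) (τ : ℝ)
    (ha : (g (1, x)).1 ≠ 0) (hd : (g (1, x)).1 + τ * (g (0, v)).1 ≠ 0) :
    conePsi g (x + τ • v) =
      conePsi g x + (τ * (g (1, x)).1 / ((g (1, x)).1 + τ * (g (0, v)).1)) • coneD g x v := by
  set a := (g (1, x)).1 with haa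
  set b := (g (1, x)).2 with hbb
  set l := (g (0, v)).1 with hll
  set L := (g (0, v)).2 with hLL
  have h1 : (g (1, x + τ • v)).1 = a + τ * l := by rw [g_one_add]; simp; rfl
  have h2 : (g (1, x + τ • v)).2 = b + τ • L := by rw [g_one_add]; simp; rfl
  rw [conePsi, h1, h2, coneD_apply, conePsi, ← haa, ← hbb, ← hll, ← hLL]
  match_scalars
  · field_simp
    ring
  · field_simp


lemma coneD_symm_apply (hbd : Bornology.IsBounded Ω)
    (hg : g '' projCone Ω = projCone Ω) {x : EuclideanSpace ℝ (Fin n)} (hx : x ∈ closure Ω)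
    (v : EuclideanSpace ℝ (Fin n)) :
    coneD g.symm (conePsi g x) (coneD g x v) = v := by
  obtain ⟨hapos, hpsi, hdec⟩ := coneAuto_closure_pos hbd hg hx
  have ha : (g (1, x)).1 ≠ 0 := ne_of_gt hapos
  -- key : (0, coneD g x v) is the image under g of an explicit vector
  have key : ((0:ℝ), coneD g x v) =
      g (((g (1,x)).1)⁻¹ • ((0:ℝ), v) - ((g (0,v)).1 * ((g (1,x)).1)⁻¹ * ((g (1,x)).1)⁻¹) • ((1:ℝ), x)) := by
    rw [map_sub, g.map_smul, g.map_smul]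
    rw [Prod.ext_iff]
    constructor
    · show (0:ℝ) = (((g (1,x)).1)⁻¹ • g ((0:ℝ), v)).1 - (((g (0,v)).1 * ((g (1,x)).1)⁻¹ * ((g (1,x)).1)⁻¹) • g ((1:ℝ), x)).1
      simp only [Prod.smul_fst, smul_eq_mul]
      field_simp
      ring
    · show coneD g x v = (((g (1,x)).1)⁻¹ • g ((0:ℝ), v)).2 - (((g (0,v)).1 * ((g (1,x)).1)⁻¹ * ((g (1,x)).1)⁻¹) • g ((1:ℝ), x)).2
      simp only [Prod.smul_snd]
      rw [coneD_apply, conePsi]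
      match_scalars <;> · field_simp; try ring
    -- done key
  have hsymm0 : g.symm ((0:ℝ), coneD g x v) =
      ((g (1,x)).1)⁻¹ • ((0:ℝ), v) - ((g (0,v)).1 * ((g (1,x)).1)⁻¹ * ((g (1,x)).1)⁻¹) • ((1:ℝ), x) := by
    rw [key, LinearEquiv.symm_apply_apply]
  have hsymm1 : g.symm ((1:ℝ), conePsi g x) = ((g (1, x)).1)⁻¹ • ((1:ℝ), x) :=
    coneAuto_symm_one hbd hg hx
  have ha1 : (g.symm ((1:ℝ), conePsi g x)).1 = ((g (1, x)).1)⁻¹ := by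
    rw [hsymm1]; simp
  have hpsx : conePsi g.symm (conePsi g x) = x := conePsi_symm_conePsi hbd hg hx
  have hc1 : (g.symm ((0:ℝ), coneD g x v)).1
      = -((g (0,v)).1 * ((g (1,x)).1)⁻¹ * ((g (1,x)).1)⁻¹) := by
    rw [hsymm0]; simp
  have hc2 : (g.symm ((0:ℝ), coneD g x v)).2
      = ((g (1,x)).1)⁻¹ • v - ((g (0,v)).1 * ((g (1,x)).1)⁻¹ * ((g (1,x)).1)⁻¹) • x := by
    rw [hsymm0]; simp
  rw [coneD_apply, ha1, hpsx, hc1, hc2, inv_inv]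
  match_scalars <;> · field_simp; try ring

lemma coneD_ne_zero (hbd : Bornology.IsBounded Ω)
    (hg : g '' projCone Ω = projCone Ω) {x : EuclideanSpace ℝ (Fin n)} (hx : x ∈ closure Ω)
    {v : EuclideanSpace ℝ (Fin n)} (hv : v ≠ 0) : coneD g x v ≠ 0 := by
  intro h
  apply hv
  have := coneD_symm_apply hbd hg hx v
  rw [h, map_zero] at this
  exact this.symm

set_option maxHeartbeats 1000000 in
lemma hasFDerivAt_conePsi {x : EuclideanSpace ℝ (Fin n)} (ha : (g (1, x)).1 ≠ 0) :
    HasFDerivAt (conePsi g) ((coneD g x).toContinuousLinearMap) x := by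
  set G : EuclideanSpace ℝ (Fin n) →L[ℝ] ℝ × EuclideanSpace ℝ (Fin n) :=
    (g.toLinearMap.comp (LinearMap.inr ℝ ℝ (EuclideanSpace ℝ (Fin n)))).toContinuousLinearMap
    with hG
  have hGapp : ∀ w : EuclideanSpace ℝ (Fin n), G w = g ((0:ℝ), w) := fun w => by
    simp [hG]
  have hF : (fun y : EuclideanSpace ℝ (Fin n) => g (1, y))
      = (fun y : EuclideanSpace ℝ (Fin n) => g (1, 0) + G y) := by
    funext y
    rw [hGapp, ← map_add]
    congr 1
    rw [Prod.ext_iff]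
    constructor <;> simp
  have hFd : HasFDerivAt (fun y : EuclideanSpace ℝ (Fin n) => g (1, y)) G x := by
    rw [hF]
    exact G.hasFDerivAt.const_add (g (1, 0))
  have h1 : HasFDerivAt (fun y : EuclideanSpace ℝ (Fin n) => (g (1, y)).1)
      ((ContinuousLinearMap.fst ℝ ℝ (EuclideanSpace ℝ (Fin n))).comp G) x :=
    (ContinuousLinearMap.fst ℝ ℝ (EuclideanSpace ℝ (Fin n))).hasFDerivAt.comp x hFd
  have h2 : HasFDerivAt (fun y : EuclideanSpace ℝ (Fin n) => (g (1, y)).2)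
      ((ContinuousLinearMap.snd ℝ ℝ (EuclideanSpace ℝ (Fin n))).comp G) x :=
    (ContinuousLinearMap.snd ℝ ℝ (EuclideanSpace ℝ (Fin n))).hasFDerivAt.comp x hFd
  have hinv : HasFDerivAt (fun y : EuclideanSpace ℝ (Fin n) => ((g (1, y)).1)⁻¹)
      ((-ContinuousLinearMap.mulLeftRight ℝ ℝ ((g (1,x)).1)⁻¹ ((g (1,x)).1)⁻¹).comp
        ((ContinuousLinearMap.fst ℝ ℝ (EuclideanSpace ℝ (Fin n))).comp G)) x :=
    (hasFDerivAt_inv' ha).comp x h1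
  have hsm := hinv.smul h2
  have heq : conePsi g = fun y : EuclideanSpace ℝ (Fin n) =>
      ((g (1, y)).1)⁻¹ • (g (1, y)).2 := rfl
  rw [heq]
  refine hsm.congr_fderiv ?_
  apply ContinuousLinearMap.ext
  intro w
  simp only [LinearMap.coe_toContinuousLinearMap', ContinuousLinearMap.add_apply,
    ContinuousLinearMap.coe_smul', Pi.smul_apply, ContinuousLinearMap.smulRight_apply,
    ContinuousLinearMap.coe_comp', Function.comp_apply, ContinuousLinearMap.neg_apply,
    ContinuousLinearMap.mulLeftRight_apply, ContinuousLinearMap.coe_fst',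
    ContinuousLinearMap.coe_snd']
  rw [coneD_apply, conePsi, hGapp]
  match_scalars <;> · field_simp; try ring

lemma rayParam_conePsi_ge (hbd : Bornology.IsBounded Ω) (hop : IsOpen Ω) (hconv : Convex ℝ Ω)
    (hg : g '' projCone Ω = projCone Ω)
    {x v : EuclideanSpace ℝ (Fin n)} (hx : x ∈ Ω) (hv : v ≠ 0) :
    0 < (g (1,x)).1 + rayParam Ω x v * (g (0,v)).1 ∧
    rayParam Ω x v * (g (1,x)).1 / ((g (1,x)).1 + rayParam Ω x v * (g (0,v)).1)
      ≤ rayParam Ω (conePsi g x) (coneD g x v) := by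
  obtain ⟨hIcc, hpos⟩ := raySet_eq_Icc hbd hop hconv hx hv
  set t := rayParam Ω x v with ht
  have hmemt : x + t • v ∈ closure Ω := by
    have h1 : t ∈ Icc (0:ℝ) t := ⟨hpos.le, le_rfl⟩
    rw [← hIcc] at h1
    exact h1.2
  have ha : 0 < (g (1,x)).1 := (coneAuto_closure_pos hbd hg (subset_closure hx)).1
  have hd0 : 0 < (g (1, x + t • v)).1 := (coneAuto_closure_pos hbd hg hmemt).1
  have hd' : (g (1, x + t • v)).1 = (g (1,x)).1 + t * (g (0,v)).1 := by
    rw [g_one_add]; simp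
  have hden : 0 < (g (1,x)).1 + t * (g (0,v)).1 := by rw [← hd']; exact hd0
  refine ⟨hden, ?_⟩
  have hline := conePsi_line (g := g) x v t (ne_of_gt ha) (ne_of_gt hden)
  have hψx : conePsi g x ∈ Ω := coneAuto_mem hg hx
  have hw : coneD g x v ≠ 0 := coneD_ne_zero hbd hg (subset_closure hx) hv
  obtain ⟨hIcc', hpos'⟩ := raySet_eq_Icc hbd hop hconv hψx hw
  have hs_nonneg : 0 ≤ t * (g (1,x)).1 / ((g (1,x)).1 + t * (g (0,v)).1) :=
    div_nonneg (mul_nonneg hpos.le ha.le) hden.le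
  have hmem' : t * (g (1,x)).1 / ((g (1,x)).1 + t * (g (0,v)).1)
      ∈ {s : ℝ | 0 ≤ s ∧ conePsi g x + s • coneD g x v ∈ closure Ω} := by
    refine ⟨hs_nonneg, ?_⟩
    rw [← hline]
    exact (coneAuto_closure_pos hbd hg hmemt).2.1
  rw [hIcc'] at hmem'
  exact hmem'.2

lemma rayParam_conePsi_eq (hbd : Bornology.IsBounded Ω) (hop : IsOpen Ω) (hconv : Convex ℝ Ω)
    (hg : g '' projCone Ω = projCone Ω)
    {x v : EuclideanSpace ℝ (Fin n)} (hx : x ∈ Ω) (hv : v ≠ 0) :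
    rayParam Ω (conePsi g x) (coneD g x v)
      = rayParam Ω x v * (g (1,x)).1 / ((g (1,x)).1 + rayParam Ω x v * (g (0,v)).1) := by
  obtain ⟨hden, hge⟩ := rayParam_conePsi_ge hbd hop hconv hg hx hv
  have hg' : g.symm '' projCone Ω = projCone Ω := symm_coneAuto hg
  set a := (g (1,x)).1 with haa
  set l := (g (0,v)).1 with hll
  set t := rayParam Ω x v with ht
  set ψ := conePsi g x with hψ
  set w := coneD g x v with hwdef
  have ha : 0 < a := (coneAuto_closure_pos hbd hg (subset_closure hx)).1
  have hψx : ψ ∈ Ω := coneAuto_mem hg hx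
  have hw : w ≠ 0 := coneD_ne_zero hbd hg (subset_closure hx) hv
  obtain ⟨hIcc, hpos⟩ := raySet_eq_Icc hbd hop hconv hx hv
  obtain ⟨hIcc', hpos'⟩ := raySet_eq_Icc hbd hop hconv hψx hw
  set r := rayParam Ω ψ w with hr
  -- apply the forward inequality to `g.symm` at `ψ`, `w`
  obtain ⟨hden', hge'⟩ := rayParam_conePsi_ge (g := g.symm) hbd hop hconv hg' hψx hw
  have hsx : conePsi g.symm ψ = x := conePsi_symm_conePsi hbd hg (subset_closure hx)
  have hsv : coneD g.symm ψ w = v := coneD_symm_apply hbd hg (subset_closure hx) v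
  rw [hsx, hsv, ← hr, ← ht] at hge'
  rw [← hr] at hden'
  set a' := (g.symm (1, ψ)).1 with ha'
  set l' := (g.symm (0, w)).1 with hl'
  have ha'pos : 0 < a' := (coneAuto_closure_pos hbd hg' (subset_closure hψx)).1
  set τ := r * a' / (a' + r * l') with hτ
  have hτ_nonneg : 0 ≤ τ := div_nonneg (mul_nonneg hpos'.le ha'pos.le) hden'.le
  have hτ_le : τ ≤ t := hge'
  have hmemτ : x + τ • v ∈ closure Ω := by
    have h1 : τ ∈ Icc 0 t := ⟨hτ_nonneg, hτ_le⟩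
    rw [← hIcc] at h1
    exact h1.2
  have hy : ψ + r • w ∈ closure Ω := by
    have h1 : r ∈ Icc (0:ℝ) r := ⟨hpos'.le, le_rfl⟩
    rw [← hIcc'] at h1
    exact h1.2
  -- χ maps ψ + r • w back to x + τ • v
  have hback : conePsi g.symm (ψ + r • w) = x + τ • v := by
    have h1 := conePsi_line (g := g.symm) ψ w r (ne_of_gt ha'pos) (ne_of_gt hden')
    rw [h1, hsx, hsv, ← ha', ← hl', ← hτ]
  -- hence ψ maps x + τ • v to ψ + r • w
  have hforth : conePsi g (x + τ • v) = ψ + r • w := by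
    have h2 := conePsi_symm_conePsi (g := g.symm) hbd hg' hy
    rw [LinearEquiv.symm_symm] at h2
    rw [← hback, h2]
  -- the line formula for ψ at x + τ • v
  have hdenτ0 : 0 < (g (1, x + τ • v)).1 := (coneAuto_closure_pos hbd hg hmemτ).1
  have hdenτ' : (g (1, x + τ • v)).1 = a + τ * l := by rw [g_one_add]; simp; rfl
  have hdenτ : 0 < a + τ * l := by rw [← hdenτ']; exact hdenτ0
  have hline := conePsi_line (g := g) x v τ (ne_of_gt ha) (ne_of_gt hdenτ)
  rw [hforth, ← haa, ← hll, ← hψ, ← hwdef] at hline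
  have hsr : τ * a / (a + τ * l) = r := by
    have h3 : (τ * a / (a + τ * l)) • w = r • w := by
      have := hline
      have h4 : (τ * a / (a + τ * l)) • w - r • w = 0 := by
        have h5 : ψ + r • w - ψ - r • w = 0 := by abel
        calc (τ * a / (a + τ * l)) • w - r • w
            = (ψ + (τ * a / (a + τ * l)) • w) - ψ - r • w := by abel
        _ = (ψ + r • w) - ψ - r • w := by rw [← this]
        _ = 0 := h5
      exact sub_eq_zero.1 h4
    have := smul_left_injective ℝ hw h3
    exact this
  -- monotonicity of the parameter map
  have hmono : τ * a / (a + τ * l) ≤ t * a / (a + t * l) := by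
    rw [haa, hll, ht] at *
    have hkey : t * a / (a + t * l) - τ * a / (a + τ * l)
        = a ^ 2 * (t - τ) / ((a + t * l) * (a + τ * l)) := by
      have hne1 : a + t * l ≠ 0 := hden.ne'
      have hne2 : a + τ * l ≠ 0 := hdenτ.ne'
      rw [div_sub_div _ _ hne1 hne2]
      ring
    have : 0 ≤ a ^ 2 * (t - τ) / ((a + t * l) * (a + τ * l)) := by
      apply div_nonneg
      · exact mul_nonneg (sq_nonneg a) (by linarith)
      · positivity
    linarith
  rw [hsr] at hmono
  exact le_antisymm hmono hge

lemma dist_ray (x v : EuclideanSpace ℝ (Fin n)) {c : ℝ} (hc : 0 ≤ c) :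
    dist x (x + c • v) = c * ‖v‖ := by
  rw [dist_eq_norm]
  have : x - (x + c • v) = -(c • v) := by abel
  rw [this, norm_neg, norm_smul, Real.norm_eq_abs, abs_of_nonneg hc]

lemma finslerNorm_eq (hbd : Bornology.IsBounded Ω) (hop : IsOpen Ω) (hconv : Convex ℝ Ω)
    {x v : EuclideanSpace ℝ (Fin n)} (hx : x ∈ Ω) (hv : v ≠ 0) :
    finslerNorm Ω x v = (1/2) * (1 / rayParam Ω x (-v) + 1 / rayParam Ω x v) := by
  have hp := (raySet_eq_Icc hbd hop hconv hx hv).2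
  have hm := (raySet_eq_Icc hbd hop hconv hx (neg_ne_zero.2 hv)).2
  have hvn : (0:ℝ) < ‖v‖ := norm_pos_iff.2 hv
  rw [finslerNorm, if_neg hv]
  simp only []
  rw [dist_ray x (-v) hm.le, dist_ray x v hp.le, norm_neg]
  field_simp

lemma finslerNorm_conePsi (hbd : Bornology.IsBounded Ω) (hop : IsOpen Ω) (hconv : Convex ℝ Ω)
    (hg : g '' projCone Ω = projCone Ω)
    {x : EuclideanSpace ℝ (Fin n)} (hx : x ∈ Ω) (v : EuclideanSpace ℝ (Fin n)) :
    finslerNorm Ω (conePsi g x) (coneD g x v) = finslerNorm Ω x v := by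
  by_cases hv : v = 0
  · subst hv
    rw [map_zero]
    simp [finslerNorm]
  · have hψx : conePsi g x ∈ Ω := coneAuto_mem hg hx
    have hw : coneD g x v ≠ 0 := coneD_ne_zero hbd hg (subset_closure hx) hv
    rw [finslerNorm_eq hbd hop hconv hψx hw, finslerNorm_eq hbd hop hconv hx hv]
    have ha : 0 < (g (1,x)).1 := (coneAuto_closure_pos hbd hg (subset_closure hx)).1
    set a := (g (1,x)).1 with haa
    set l := (g (0,v)).1 with hll
    set t := rayParam Ω x v with ht
    set t' := rayParam Ω x (-v) with ht'
    have hp := (raySet_eq_Icc hbd hop hconv hx hv).2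
    have hm := (raySet_eq_Icc hbd hop hconv hx (neg_ne_zero.2 hv)).2
    obtain ⟨hdenp, -⟩ := rayParam_conePsi_ge hbd hop hconv hg hx hv
    obtain ⟨hdenm, -⟩ := rayParam_conePsi_ge hbd hop hconv hg hx (neg_ne_zero.2 hv)
    have hml : (g (0, -v)).1 = -l := by
      have : ((0:ℝ), -v) = -((0:ℝ), v) := by rw [Prod.ext_iff]; constructor <;> simp
      rw [this, map_neg]
      simp [hll]
    rw [hml] at hdenm
    have h1 : rayParam Ω (conePsi g x) (coneD g x v) = t * a / (a + t * l) :=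
      rayParam_conePsi_eq hbd hop hconv hg hx hv
    have h2 : rayParam Ω (conePsi g x) (-(coneD g x v)) = t' * a / (a - t' * l) := by
      have hneg : -(coneD g x v) = coneD g x (-v) := by rw [map_neg]
      rw [hneg, rayParam_conePsi_eq hbd hop hconv hg hx (neg_ne_zero.2 hv), hml, ← ht', ← haa]
      ring_nf
    rw [h1, h2]
    rw [ht, ht', haa, hll] at *
    field_simp
    ring
    have hX : (g (1,x)).1 ≠ 0 := (coneAuto_closure_pos hbd hg (subset_closure hx)).1.ne'
    rw [mul_right_comm _ _ ((g (1, x)).1)⁻¹, mul_right_comm _ _ ((g (1, x)).1)⁻¹, mul_inv_cancel₀ hX, one_mul, one_mul]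

lemma finsler_ball_image (hbd : Bornology.IsBounded Ω) (hop : IsOpen Ω) (hconv : Convex ℝ Ω)
    (hg : g '' projCone Ω = projCone Ω)
    {x : EuclideanSpace ℝ (Fin n)} (hx : x ∈ Ω) :
    {u : EuclideanSpace ℝ (Fin n) | finslerNorm Ω (conePsi g x) u < 1}
      = coneD g x '' {v : EuclideanSpace ℝ (Fin n) | finslerNorm Ω x v < 1} := by
  have hg' : g.symm '' projCone Ω = projCone Ω := symm_coneAuto hg
  have hψx : conePsi g x ∈ Ω := coneAuto_mem hg hx
  have hDD' : ∀ u, coneD g x (coneD g.symm (conePsi g x) u) = u := by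
    intro u
    have h := coneD_symm_apply (g := g.symm) hbd hg' (subset_closure hψx) u
    rw [LinearEquiv.symm_symm] at h
    rw [conePsi_symm_conePsi hbd hg (subset_closure hx)] at h
    exact h
  ext u
  constructor
  · intro hu
    refine ⟨coneD g.symm (conePsi g x) u, ?_, hDD' u⟩
    show finslerNorm Ω x (coneD g.symm (conePsi g x) u) < 1
    have := finslerNorm_conePsi hbd hop hconv hg hx (coneD g.symm (conePsi g x) u)
    rw [hDD' u] at this
    rw [← this]
    exact hu
  · rintro ⟨v, hv, rfl⟩
    show finslerNorm Ω (conePsi g x) (coneD g x v) < 1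
    rw [finslerNorm_conePsi hbd hop hconv hg hx v]
    exact hv

lemma coneD_det_ne_zero (hbd : Bornology.IsBounded Ω)
    (hg : g '' projCone Ω = projCone Ω)
    {x : EuclideanSpace ℝ (Fin n)} (hx : x ∈ Ω) :
    LinearMap.det (coneD g x) ≠ 0 := by
  have hg' : g.symm '' projCone Ω = projCone Ω := symm_coneAuto hg
  have hψx : conePsi g x ∈ Ω := coneAuto_mem hg hx
  have hDD' : ∀ u, coneD g x (coneD g.symm (conePsi g x) u) = u := by
    intro u
    have h := coneD_symm_apply (g := g.symm) hbd hg' (subset_closure hψx) u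
    rw [LinearEquiv.symm_symm] at h
    rw [conePsi_symm_conePsi hbd hg (subset_closure hx)] at h
    exact h
  have hD'D : ∀ v, coneD g.symm (conePsi g x) (coneD g x v) = v := fun v =>
    coneD_symm_apply hbd hg (subset_closure hx) v
  let e : EuclideanSpace ℝ (Fin n) ≃ₗ[ℝ] EuclideanSpace ℝ (Fin n) :=
    LinearEquiv.ofLinear (coneD g x) (coneD g.symm (conePsi g x))
      (LinearMap.ext hDD') (LinearMap.ext hD'D)
  have h1 : LinearMap.det (e : EuclideanSpace ℝ (Fin n) →ₗ[ℝ] EuclideanSpace ℝ (Fin n)) ≠ 0 :=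
    IsUnit.ne_zero e.isUnit_det'
  exact h1

lemma normVol_apply (s : Set (EuclideanSpace ℝ (Fin n))) :
    normVol n s = (volume (Metric.ball (0 : EuclideanSpace ℝ (Fin n)) 1))⁻¹ * volume s := by
  rw [normVol, Measure.smul_apply, smul_eq_mul]

lemma setLIntegral_normVol (s : Set (EuclideanSpace ℝ (Fin n)))
    (f : EuclideanSpace ℝ (Fin n) → ℝ≥0∞) :
    ∫⁻ x in s, f x ∂(normVol n)
      = (volume (Metric.ball (0 : EuclideanSpace ℝ (Fin n)) 1))⁻¹ * ∫⁻ x in s, f x ∂volume := by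
  rw [normVol, Measure.restrict_smul, lintegral_smul_measure, smul_eq_mul]

lemma finsler_ball_meas (hbd : Bornology.IsBounded Ω) (hop : IsOpen Ω) (hconv : Convex ℝ Ω)
    {x : EuclideanSpace ℝ (Fin n)} (hx : x ∈ Ω) :
    0 < normVol n {v : EuclideanSpace ℝ (Fin n) | finslerNorm Ω x v < 1} ∧
      normVol n {v : EuclideanSpace ℝ (Fin n) | finslerNorm Ω x v < 1} ≠ ⊤ := by
  set c := volume (Metric.ball (0 : EuclideanSpace ℝ (Fin n)) 1) with hc
  have hc0 : c ≠ 0 := (Metric.measure_ball_pos volume 0 one_pos).ne'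
  have hctop : c ≠ ⊤ := measure_ball_lt_top.ne
  set s := {v : EuclideanSpace ℝ (Fin n) | finslerNorm Ω x v < 1} with hs
  constructor
  · -- positive
    obtain ⟨ε, hε, hball⟩ := Metric.isOpen_iff.1 hop x hx
    have hsub : Metric.ball (0 : EuclideanSpace ℝ (Fin n)) (ε/2) ⊆ s := by
      intro v hv
      rw [mem_ball_zero_iff] at hv
      by_cases hv0 : v = 0
      · subst hv0; simp [hs, finslerNorm]
      · have hvn : (0:ℝ) < ‖v‖ := norm_pos_iff.2 hv0
        have key : ∀ u : EuclideanSpace ℝ (Fin n), u ≠ 0 → ‖u‖ = ‖v‖ →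
            1 / rayParam Ω x u ≤ 2 * ‖v‖ / ε := by
          intro u hu hun
          have hun' : (0:ℝ) < ‖u‖ := norm_pos_iff.2 hu
          have hεu : (0:ℝ) < ε / (2 * ‖u‖) := by positivity
          have hmem : x + (ε / (2 * ‖u‖)) • u ∈ closure Ω := by
            apply subset_closure
            apply hball
            rw [Metric.mem_ball, dist_comm, dist_ray x u hεu.le]
            have : ε / (2 * ‖u‖) * ‖u‖ = ε / 2 := by field_simp
            rw [this]
            linarith
          obtain ⟨hIcc, hpos⟩ := raySet_eq_Icc hbd hop hconv hx hu
          have hle : ε / (2 * ‖u‖) ≤ rayParam Ω x u := by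
            have hmem2 : ε / (2 * ‖u‖) ∈ {t : ℝ | 0 ≤ t ∧ x + t • u ∈ closure Ω} :=
              ⟨hεu.le, hmem⟩
            rw [hIcc] at hmem2
            exact hmem2.2
          have h2 := one_div_le_one_div_of_le hεu hle
          have h3 : 1 / (ε / (2 * ‖u‖)) = 2 * ‖u‖ / ε := one_div_div _ _
          rw [h3] at h2
          rw [hun] at h2
          exact h2
        have hfn : finslerNorm Ω x v
            = (1/2) * (1 / rayParam Ω x (-v) + 1 / rayParam Ω x v) :=
          finslerNorm_eq hbd hop hconv hx hv0
        have k1 := key v hv0 rfl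
        have k2 := key (-v) (neg_ne_zero.2 hv0) (norm_neg v)
        show finslerNorm Ω x v < 1
        rw [hfn]
        have : 2 * ‖v‖ / ε < 1 := by
          rw [div_lt_one hε]
          linarith
        linarith
    rw [normVol_apply, ← hc]
    have h1 : 0 < volume (Metric.ball (0 : EuclideanSpace ℝ (Fin n)) (ε/2)) :=
      Metric.measure_ball_pos volume 0 (by linarith)
    have h2 : 0 < volume s := lt_of_lt_of_le h1 (measure_mono hsub)
    exact ENNReal.mul_pos (ENNReal.inv_ne_zero.2 hctop) h2.ne'
  · -- finite
    obtain ⟨M, hM⟩ := hbd.closure.subset_closedBall 0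
    have hsub2 : s ⊆ Metric.ball (0 : EuclideanSpace ℝ (Fin n)) (M + ‖x‖ + 1) := by
      intro v hv
      rw [mem_ball_zero_iff]
      have hxM : ‖x‖ ≤ M := by
        simpa [dist_eq_norm] using hM (subset_closure hx)
      by_cases hv0 : v = 0
      · subst hv0
        rw [norm_zero]
        nlinarith [norm_nonneg x]
      · have hvn : (0:ℝ) < ‖v‖ := norm_pos_iff.2 hv0
        have key : ∀ u : EuclideanSpace ℝ (Fin n), u ≠ 0 → ‖u‖ = ‖v‖ →
            ‖v‖ / (M + ‖x‖) ≤ 1 / rayParam Ω x u ∧ 0 < M + ‖x‖ := by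
          intro u hu hun
          have hun' : (0:ℝ) < ‖u‖ := norm_pos_iff.2 hu
          obtain ⟨hIcc, hpos⟩ := raySet_eq_Icc hbd hop hconv hx hu
          have hmem : x + rayParam Ω x u • u ∈ closure Ω := by
            have h1 : rayParam Ω x u ∈ Icc (0:ℝ) (rayParam Ω x u) := ⟨hpos.le, le_rfl⟩
            rw [← hIcc] at h1
            exact h1.2
          have hb1 : ‖x + rayParam Ω x u • u‖ ≤ M := by
            simpa [dist_eq_norm] using hM hmem
          have hb2 : rayParam Ω x u * ‖u‖ ≤ M + ‖x‖ := by
            have h4 := norm_add_le (-x) (x + rayParam Ω x u • u)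
            have h5 : -x + (x + rayParam Ω x u • u) = rayParam Ω x u • u := by abel
            rw [h5, norm_neg, norm_smul, Real.norm_eq_abs, abs_of_nonneg hpos.le] at h4
            linarith
          have hMx : 0 < M + ‖x‖ := lt_of_lt_of_le (mul_pos hpos hun') hb2
          refine ⟨?_, hMx⟩
          have hle : rayParam Ω x u ≤ (M + ‖x‖) / ‖u‖ := (le_div_iff₀ hun').2 hb2
          have h6 := one_div_le_one_div_of_le hpos hle
          have h7 : 1 / ((M + ‖x‖) / ‖u‖) = ‖u‖ / (M + ‖x‖) := one_div_div _ _
          rw [h7, hun] at h6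
          exact h6
        obtain ⟨k1, hMx⟩ := key v hv0 rfl
        obtain ⟨k2, -⟩ := key (-v) (neg_ne_zero.2 hv0) (norm_neg v)
        have hfn : finslerNorm Ω x v
            = (1/2) * (1 / rayParam Ω x (-v) + 1 / rayParam Ω x v) :=
          finslerNorm_eq hbd hop hconv hx hv0
        have hlt : finslerNorm Ω x v < 1 := hv
        rw [hfn] at hlt
        have : ‖v‖ / (M + ‖x‖) < 1 := by linarith
        rw [div_lt_one hMx] at this
        linarith
    rw [normVol_apply, ← hc]
    apply ENNReal.mul_ne_top (ENNReal.inv_ne_top.2 hc0)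
    exact ((measure_mono hsub2).trans_lt measure_ball_lt_top).ne

lemma meas_ball_conePsi (hbd : Bornology.IsBounded Ω) (hop : IsOpen Ω) (hconv : Convex ℝ Ω)
    (hg : g '' projCone Ω = projCone Ω)
    {x : EuclideanSpace ℝ (Fin n)} (hx : x ∈ Ω) :
    normVol n {u : EuclideanSpace ℝ (Fin n) | finslerNorm Ω (conePsi g x) u < 1}
      = ENNReal.ofReal |LinearMap.det (coneD g x)|
        * normVol n {v : EuclideanSpace ℝ (Fin n) | finslerNorm Ω x v < 1} := by
  rw [finsler_ball_image hbd hop hconv hg hx, normVol_apply, normVol_apply]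
  rw [Measure.addHaar_image_linearMap volume (coneD g x)]
  rw [mul_left_comm]

/-- The Busemann volume is invariant under projective automorphisms:
if `g ∈ GL(n+1,ℝ)` preserves the cone over `Ω` and `φ` is the induced map of `Ω`,
then `μ_Ω(φ '' A) = μ_Ω(A)` for every Borel `A ⊆ Ω`. -/
theorem busemannVolume_projective_invariance {n : ℕ} (hn : 1 ≤ n)
    (Ω : Set (EuclideanSpace ℝ (Fin n)))
    (hbd : Bornology.IsBounded Ω) (hop : IsOpen Ω) (hconv : Convex ℝ Ω)
    (g : (ℝ × EuclideanSpace ℝ (Fin n)) ≃ₗ[ℝ] ℝ × EuclideanSpace ℝ (Fin n))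
    (hg : g '' projCone Ω = projCone Ω)
    (φ : EuclideanSpace ℝ (Fin n) → EuclideanSpace ℝ (Fin n))
    (hφ : ∀ x ∈ Ω, ∃ t : ℝ, 0 < t ∧ g (1, x) = (t, t • φ x))
    (A : Set (EuclideanSpace ℝ (Fin n))) (hA : A ⊆ Ω) (hAm : MeasurableSet A) :
    busemannVolume Ω (φ '' A) = busemannVolume Ω A := by
  -- φ agrees with conePsi g on Ω
  have hφψ : ∀ x ∈ Ω, φ x = conePsi g x := by
    intro x hx
    obtain ⟨t, ht, heq⟩ := hφ x hx
    have h1 : (g (1, x)).1 = t := by rw [heq]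
    have h2 : (g (1, x)).2 = t • φ x := by rw [heq]
    rw [conePsi, h1, h2, smul_smul, inv_mul_cancel₀ (ne_of_gt ht), one_smul]
  have himg : φ '' A = conePsi g '' A :=
    image_congr fun x hx => hφψ x (hA hx)
  -- basic positivity
  have hapos : ∀ x ∈ Ω, 0 < (g (1, x)).1 := fun x hx =>
    (coneAuto_closure_pos hbd hg (subset_closure hx)).1
  -- derivative hypothesis for change of variables
  set f' : EuclideanSpace ℝ (Fin n) →
      (EuclideanSpace ℝ (Fin n) →L[ℝ] EuclideanSpace ℝ (Fin n)) :=
    fun x => (coneD g x).toContinuousLinearMap with hf'def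
  have hf' : ∀ x ∈ A, HasFDerivWithinAt (conePsi g) (f' x) A x := fun x hx =>
    (hasFDerivAt_conePsi (ne_of_gt (hapos x (hA hx)))).hasFDerivWithinAt
  -- injectivity
  have hinj : InjOn (conePsi g) A := by
    intro x hx y hy hxy
    have h1 := conePsi_symm_conePsi hbd hg (subset_closure (hA hx))
    have h2 := conePsi_symm_conePsi hbd hg (subset_closure (hA hy))
    rw [← h1, ← h2, hxy]
  -- the integrand
  set h : EuclideanSpace ℝ (Fin n) → ℝ≥0∞ :=
    fun y => (normVol n {v : EuclideanSpace ℝ (Fin n) | finslerNorm Ω y v < 1})⁻¹ with hhdef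
  have hdet : ∀ x ∈ A, (f' x).det = LinearMap.det (coneD g x) := by
    intro x hx
    rw [hf'def]
    show LinearMap.det ((LinearMap.toContinuousLinearMap (coneD g x) :
      EuclideanSpace ℝ (Fin n) →L[ℝ] EuclideanSpace ℝ (Fin n)) :
      EuclideanSpace ℝ (Fin n) →ₗ[ℝ] EuclideanSpace ℝ (Fin n)) = _
    rw [LinearMap.coe_toContinuousLinearMap]
  -- change of variables
  rw [busemannVolume, busemannVolume, himg]
  rw [setLIntegral_normVol, setLIntegral_normVol]
  congr 1
  rw [lintegral_image_eq_lintegral_abs_det_fderiv_mul volume hAm hf' hinj h]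
  apply setLIntegral_congr_fun hAm
  intro x hx
  have hxΩ : x ∈ Ω := hA hx
  have hdetx := hdet x hx
  have hdne : LinearMap.det (coneD g x) ≠ 0 := coneD_det_ne_zero hbd hg hxΩ
  set d : ℝ≥0∞ := ENNReal.ofReal |LinearMap.det (coneD g x)| with hd
  have hd0 : d ≠ 0 := by
    rw [hd]
    simp only [ne_eq, ENNReal.ofReal_eq_zero, not_le]
    exact abs_pos.2 hdne
  have hdtop : d ≠ ⊤ := ENNReal.ofReal_ne_top
  obtain ⟨hm0, hmtop⟩ := finsler_ball_meas hbd hop hconv hxΩ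
  have hψmeas := meas_ball_conePsi hbd hop hconv hg hxΩ
  show ENNReal.ofReal |(f' x).det| * h (conePsi g x) = h x
  rw [hdetx, hhdef]
  simp only []
  rw [hψmeas, ← hd]
  rw [ENNReal.mul_inv (Or.inl hd0) (Or.inl hdtop), ← mul_assoc,
    ENNReal.mul_inv_cancel hd0 hdtop, one_mul]

end
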